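/- Let f_2 : [0,1] → [0,1] be the tent map (f_2(x) = 2x for x ≤ 1/2, 2 − 2x for x > 1/2) and f_1 ≡ 0. For the multiple mapping F = {f_1, f_2}, the range of F^n satisfies F^n(x) = {0} ∪ {f_2^j(x) : 1 ≤ j ≤ n} ... in particular R(F^n) ⊆ { {0} ∪ S : S finite set of iterates of x under f_2 }, and F is topologically mixing in the multiple-mapping sense. -/

import Mathlib

open Set Metric Filter TopologicalSpace

/-- The set of all `n`-fold compositions of members of `F = {f 0, …, f (m-1)}` applied to `x`. -/
def iterSet {X : Type*} {m : ℕ} (f : Fin m → X → X) : ℕ → X → Set X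
  | 0, x => {x}
  | n + 1, x => ⋃ i, iterSet f n (f i x)

lemma iterSet_finite {X : Type*} {m : ℕ} (f : Fin m → X → X) (n : ℕ) (x : X) :
    (iterSet f n x).Finite := by
  induction n generalizing x with
  | zero => exact Set.finite_singleton x
  | succ n ih => exact Set.finite_iUnion fun i => ih _

lemma iterSet_nonempty {X : Type*} {m : ℕ} (hm : 0 < m) (f : Fin m → X → X) (n : ℕ) (x : X) :
    (iterSet f n x).Nonempty := by
  induction n generalizing x with
  | zero => exact ⟨x, rfl⟩
  | succ n ih =>
      obtain ⟨y, hy⟩ := ih (f ⟨0, hm⟩ x)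
      exact ⟨y, Set.mem_iUnion.2 ⟨⟨0, hm⟩, hy⟩⟩

/-- `F^n(x)` as an element of the hyperspace of nonempty compact subsets. -/
noncomputable def iterNC {X : Type*} [MetricSpace X] {m : ℕ} (hm : 0 < m)
    (f : Fin m → X → X) (n : ℕ) (x : X) : NonemptyCompacts X :=
  ⟨⟨iterSet f n x, (iterSet_finite f n x).isCompact⟩, iterSet_nonempty hm f n x⟩

/-- `F` is transitive: for all nonempty open `U V ⊆ X` with `V ∩ R_a(F) ≠ ∅`
(i.e. some value `F^N(z)` of the stable range lies inside `V`), there exist `n ∈ ℕ`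
and `x ∈ U` with `F^n(x) ⊆ V` (i.e. `F^n(U) ∩ e(V) ≠ ∅`). -/
def TransitiveMM {X : Type*} [MetricSpace X] {m : ℕ} (f : Fin m → X → X) (N : ℕ) : Prop :=
  ∀ U V : Set X, IsOpen U → U.Nonempty → IsOpen V → V.Nonempty →
    (∃ z : X, iterSet f N z ⊆ V) →
    ∃ n : ℕ, 0 < n ∧ ∃ x ∈ U, iterSet f n x ⊆ V

/-- `F` is (topologically) mixing: for all nonempty open `U V ⊆ X` with `V ∩ R_a(F) ≠ ∅`,
there is `N'` such that for every `n ≥ N'` there is `x ∈ U` with `F^n(x) ⊆ V`. -/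
def MixingMM {X : Type*} [MetricSpace X] {m : ℕ} (f : Fin m → X → X) (N : ℕ) : Prop :=
  ∀ U V : Set X, IsOpen U → U.Nonempty → IsOpen V → V.Nonempty →
    (∃ z : X, iterSet f N z ⊆ V) →
    ∃ N' : ℕ, 0 < N' ∧ ∀ n : ℕ, N' ≤ n → ∃ x ∈ U, iterSet f n x ⊆ V

/-- The unit interval `[0,1]` as a (compact) metric space. -/
abbrev UnitI : Type := Set.Icc (0 : ℝ) 1

/-- The tent map `x ↦ 2x` on `[0,1/2]`, `x ↦ 2 - 2x` on `(1/2,1]`, i.e. `min (2x) (2-2x)`. -/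
noncomputable def tentMap : UnitI → UnitI := fun x =>
  ⟨min (2 * (x : ℝ)) (2 - 2 * (x : ℝ)), by
    obtain ⟨hx0, hx1⟩ := x.2
    constructor
    · exact le_min (by linarith) (by linarith)
    · rcases le_total (x : ℝ) (1 / 2) with h | h
      · exact min_le_of_left_le (by linarith)
      · exact min_le_of_right_le (by linarith)⟩

/-- The zero point of `[0,1]`. -/
noncomputable def zeroI : UnitI := ⟨0, by constructor <;> norm_num⟩

/-- The constant map `f₁ ≡ 0` on `[0,1]`. -/
noncomputable def zeroMap : UnitI → UnitI := fun _ => zeroI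

lemma tentMap_zeroI : tentMap zeroI = zeroI := by
  apply Subtype.ext
  norm_num [tentMap, zeroI]

lemma iterSet_zeroI (n : ℕ) : iterSet ![zeroMap, tentMap] n zeroI ⊆ {zeroI} := by
  induction n with
  | zero => simp [iterSet]
  | succ n ih =>
      intro y hy
      rw [iterSet] at hy
      obtain ⟨i, hi⟩ := Set.mem_iUnion.1 hy
      fin_cases i <;> simp only [Fin.mk_zero, Fin.mk_one, Fin.isValue, Matrix.cons_val_zero,
        Matrix.cons_val_one, Matrix.head_cons, zeroMap, tentMap_zeroI] at hi <;> exact ih hi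

lemma iterSet_sub (n : ℕ) (x : UnitI) :
    iterSet ![zeroMap, tentMap] n x ⊆ {zeroI, tentMap^[n] x} := by
  induction n generalizing x with
  | zero => simp [iterSet]
  | succ n ih =>
      intro y hy
      rw [iterSet] at hy
      obtain ⟨i, hi⟩ := Set.mem_iUnion.1 hy
      fin_cases i <;> simp only [Fin.mk_zero, Fin.mk_one, Fin.isValue, Matrix.cons_val_zero,
        Matrix.cons_val_one, Matrix.head_cons, zeroMap] at hi
      · exact Or.inl (iterSet_zeroI n hi)
      · rcases ih (tentMap x) hi with h | h
        · exact Or.inl h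
        · right
          rw [Set.mem_singleton_iff] at h ⊢
          rw [h, ← Function.iterate_succ_apply]

lemma tent_dyadic : ∀ m k : ℕ, k ≤ 2 ^ m → ∀ h : ((k : ℝ) / 2 ^ m) ∈ Set.Icc (0:ℝ) 1,
    tentMap^[m + 1] ⟨(k : ℝ) / 2 ^ m, h⟩ = zeroI := by
  intro m
  induction m with
  | zero =>
      intro k hk h
      interval_cases k <;>
        · apply Subtype.ext
          norm_num [tentMap, zeroI]
  | succ m ih =>
      intro k hk h
      have h2 : (0:ℝ) < 2 ^ m := by positivity
      set k' : ℕ := min k (2 ^ (m + 1) - k) with hk'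
      have hk'le : k' ≤ 2 ^ m := by
        rcases le_total k (2 ^ m) with hle | hle
        · exact le_trans (min_le_left _ _) hle
        · refine le_trans (min_le_right _ _) ?_
          omega
      have hmem : ((k' : ℝ) / 2 ^ m) ∈ Set.Icc (0:ℝ) 1 := by
        constructor
        · positivity
        · rw [div_le_one h2]
          exact_mod_cast hk'le
      have hstep : tentMap ⟨(k : ℝ) / 2 ^ (m + 1), h⟩ = ⟨(k' : ℝ) / 2 ^ m, hmem⟩ := by
        apply Subtype.ext
        simp only [tentMap]
        have e1 : 2 * ((k : ℝ) / 2 ^ (m + 1)) = (k : ℝ) / 2 ^ m := by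
          rw [pow_succ]; field_simp
        have e2 : 2 - (k : ℝ) / 2 ^ m = ((2 ^ (m + 1) - k : ℕ) : ℝ) / 2 ^ m := by
          push_cast [hk]
          rw [pow_succ]; field_simp
        rw [e1, e2, hk']
        rcases le_total k (2 ^ (m + 1) - k) with hle | hle
        · rw [min_eq_left hle, min_eq_left (by gcongr)]
        · rw [min_eq_right hle, min_eq_right (by gcongr)]
      rw [Function.iterate_succ_apply, hstep, ih k' hk'le hmem]

lemma zeroI_mem_iterSet_one (z : UnitI) : zeroI ∈ iterSet ![zeroMap, tentMap] 1 z := by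
  rw [iterSet]
  exact Set.mem_iUnion.2 ⟨0, by simp [iterSet, zeroMap]⟩

theorem tent_zero_example :
    (∀ x : UnitI, ∀ n : ℕ, 1 ≤ n →
      iterSet ![zeroMap, tentMap] n x ⊆
        insert zeroI ((fun j : ℕ => tentMap^[j] x) '' Set.Icc 1 n)) ∧
    MixingMM ![zeroMap, tentMap] 1 := by
  constructor
  · intro x n hn y hy
    rcases iterSet_sub n x hy with h | h
    · exact Or.inl h
    · exact Or.inr ⟨n, ⟨hn, le_refl n⟩, h.symm⟩
  · intro U V hU hUne hV hVne hz
    obtain ⟨z, hzV⟩ := hz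
    have h0V : zeroI ∈ V := hzV (zeroI_mem_iterSet_one z)
    obtain ⟨u, hu⟩ := hUne
    obtain ⟨ε, hε, hball⟩ := Metric.isOpen_iff.1 hU u hu
    obtain ⟨N, hN⟩ := exists_pow_lt_of_lt_one hε (by norm_num : (1:ℝ)/2 < 1)
    refine ⟨N + 1, Nat.succ_pos N, fun n hn => ?_⟩
    obtain ⟨m, rfl⟩ : ∃ m, n = m + 1 := ⟨n - 1, by omega⟩
    have hmN : N ≤ m := by omega
    have h2 : (0:ℝ) < 2 ^ m := by positivity
    have hu0 : (0:ℝ) ≤ (u : ℝ) := u.2.1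
    have hu1 : (u : ℝ) ≤ 1 := u.2.2
    set k : ℕ := ⌊(u : ℝ) * 2 ^ m⌋₊ with hk
    have hkle : k ≤ 2 ^ m := by
      have : (u : ℝ) * 2 ^ m ≤ 2 ^ m := by nlinarith
      calc k ≤ ⌊(2:ℝ) ^ m⌋₊ := Nat.floor_le_floor this
        _ = 2 ^ m := by
            rw [show ((2:ℝ) ^ m) = ((2 ^ m : ℕ) : ℝ) by push_cast; ring, Nat.floor_natCast]
    have hmem : ((k : ℝ) / 2 ^ m) ∈ Set.Icc (0:ℝ) 1 := by
      constructor
      · positivity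
      · rw [div_le_one h2]; exact_mod_cast hkle
    refine ⟨⟨(k : ℝ) / 2 ^ m, hmem⟩, hball ?_, ?_⟩
    · -- in the ball
      rw [Metric.mem_ball, Subtype.dist_eq, Real.dist_eq]
      have hfl : (k : ℝ) ≤ (u : ℝ) * 2 ^ m := Nat.floor_le (by positivity)
      have hfl2 : (u : ℝ) * 2 ^ m < k + 1 := Nat.lt_floor_add_one _
      have hd1 : (k : ℝ) / 2 ^ m ≤ (u : ℝ) := by
        rw [div_le_iff₀ h2]; exact hfl
      have hd2 : (u : ℝ) - (k : ℝ) / 2 ^ m < 1 / 2 ^ m := by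
        rw [sub_lt_iff_lt_add, ← add_div, lt_div_iff₀ h2]
        nlinarith
      have hpow : (1:ℝ) / 2 ^ m ≤ ((1:ℝ)/2) ^ N := by
        rw [div_pow, one_pow]
        apply div_le_div_of_nonneg_left one_pos.le (by positivity)
        exact pow_le_pow_right₀ one_le_two hmN
      rw [abs_sub_lt_iff]
      constructor
      · linarith
      · linarith
    · -- iterSet ⊆ V
      intro y hy
      rcases iterSet_sub (m + 1) _ hy with h | h
      · rw [h]; exact h0V
      · rw [h, tent_dyadic m k hkle hmem]; exact h0V
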